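/- Let f and g be continuously differentiable on a neighborhood of x₀, and for each W > 0 let w_W satisfy the Normalization Constraint. Then the Tao Derivative of the product f·g at x₀ equals f'(x₀)g(x₀) + g'(x₀)f(x₀). -/

import Mathlib

open MeasureTheory intervalIntegral Filter

theorem tao_derivative_product_rule
    (f g : ℝ → ℝ) (x₀ : ℝ)
    (hf : ContDiffAt ℝ 1 f x₀) (hg : ContDiffAt ℝ 1 g x₀)
    (w : ℝ → ℝ → ℝ)
    (hpos : ∀ W > (0:ℝ), ∀ t ∈ Set.Ioc (0:ℝ) W, 0 < w W t)
    (hzero : ∀ W > (0:ℝ), ∀ t ∉ Set.Ioc (0:ℝ) W, w W t = 0)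
    (hnorm : ∀ W > (0:ℝ), (∫ t in (0:ℝ)..W, w W t) = 1) :
    Tendsto
      (fun W : ℝ =>
        ((∫ t in (0:ℝ)..W, f (x₀ + t) * g (x₀ + t) * w W t) -
          ∫ t in (0:ℝ)..W, f (x₀ - t) * g (x₀ - t) * w W t) /
        (2 * ∫ t in (0:ℝ)..W, t * w W t))
      (nhdsWithin 0 (Set.Ioi 0))
      (nhds (deriv f x₀ * g x₀ + deriv g x₀ * f x₀)) := by
  set L : ℝ := deriv f x₀ * g x₀ + deriv g x₀ * f x₀ with hLdef
  have hfd := hf.hasStrictDerivAt one_ne_zero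
  have hgd := hg.hasStrictDerivAt one_ne_zero
  have hh : HasStrictDerivAt (fun x => f x * g x) L x₀ := by
    have h := hfd.mul hgd
    have : deriv f x₀ * g x₀ + f x₀ * deriv g x₀ = L := by rw [hLdef]; ring
    rwa [this] at h
  obtain ⟨u, hu, hfu⟩ := hf.contDiffOn le_rfl (by simp)
  obtain ⟨v, hv, hgv⟩ := hg.contDiffOn le_rfl (by simp)
  obtain ⟨δ₁, hδ₁, hball₁⟩ := Metric.mem_nhds_iff.1 hu
  obtain ⟨δ₂, hδ₂, hball₂⟩ := Metric.mem_nhds_iff.1 hv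
  rw [Metric.tendsto_nhdsWithin_nhds]
  intro ε hε
  have hlo := hh.isLittleO.def (show (0:ℝ) < ε/2 by linarith)
  rw [Metric.eventually_nhds_iff] at hlo
  obtain ⟨δ₃, hδ₃, hest⟩ := hlo
  refine ⟨min δ₃ (min δ₁ δ₂), by positivity, ?_⟩
  intro W hW hWd
  simp only [Set.mem_Ioi] at hW
  rw [Real.dist_eq, sub_zero, abs_of_pos hW] at hWd
  have hWδ₃ : W < δ₃ := lt_of_lt_of_le hWd (min_le_left _ _)
  have hWδ₁ : W < δ₁ := lt_of_lt_of_le hWd (le_trans (min_le_right _ _) (min_le_left _ _))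
  have hWδ₂ : W < δ₂ := lt_of_lt_of_le hWd (le_trans (min_le_right _ _) (min_le_right _ _))
  have huIcc : Set.uIcc (0:ℝ) W = Set.Icc 0 W := Set.uIcc_of_le hW.le
  -- integrability of the weight
  have hw : IntervalIntegrable (w W) volume 0 W := by
    by_contra hcon
    have h1 := hnorm W hW
    rw [intervalIntegral.integral_undef hcon] at h1
    exact zero_ne_one h1
  -- continuity of translated products on [0, W]
  have hcp : ContinuousOn (fun t => f (x₀ + t) * g (x₀ + t)) (Set.uIcc 0 W) := by
    have hmapf : Set.MapsTo (fun t => x₀ + t) (Set.uIcc 0 W) u := by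
      intro t ht
      rw [huIcc] at ht
      apply hball₁
      simp only [Metric.mem_ball, Real.dist_eq, add_sub_cancel_left]
      rw [abs_of_nonneg ht.1]; exact lt_of_le_of_lt ht.2 hWδ₁
    have hmapg : Set.MapsTo (fun t => x₀ + t) (Set.uIcc 0 W) v := by
      intro t ht
      rw [huIcc] at ht
      apply hball₂
      simp only [Metric.mem_ball, Real.dist_eq, add_sub_cancel_left]
      rw [abs_of_nonneg ht.1]; exact lt_of_le_of_lt ht.2 hWδ₂
    exact ((hfu.continuousOn.comp (continuous_const.add continuous_id).continuousOn hmapf).mul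
      (hgv.continuousOn.comp (continuous_const.add continuous_id).continuousOn hmapg))
  have hcm : ContinuousOn (fun t => f (x₀ - t) * g (x₀ - t)) (Set.uIcc 0 W) := by
    have hmapf : Set.MapsTo (fun t => x₀ - t) (Set.uIcc 0 W) u := by
      intro t ht
      rw [huIcc] at ht
      apply hball₁
      simp only [Metric.mem_ball, Real.dist_eq, sub_sub_cancel_left, abs_neg]
      rw [abs_of_nonneg ht.1]; exact lt_of_le_of_lt ht.2 hWδ₁
    have hmapg : Set.MapsTo (fun t => x₀ - t) (Set.uIcc 0 W) v := by
      intro t ht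
      rw [huIcc] at ht
      apply hball₂
      simp only [Metric.mem_ball, Real.dist_eq, sub_sub_cancel_left, abs_neg]
      rw [abs_of_nonneg ht.1]; exact lt_of_le_of_lt ht.2 hWδ₂
    exact ((hfu.continuousOn.comp (continuous_const.sub continuous_id).continuousOn hmapf).mul
      (hgv.continuousOn.comp (continuous_const.sub continuous_id).continuousOn hmapg))
  have hip : IntervalIntegrable (fun t => f (x₀ + t) * g (x₀ + t) * w W t) volume 0 W :=
    hw.continuousOn_mul hcp
  have him : IntervalIntegrable (fun t => f (x₀ - t) * g (x₀ - t) * w W t) volume 0 W :=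
    hw.continuousOn_mul hcm
  have hit : IntervalIntegrable (fun t => t * w W t) volume 0 W :=
    hw.continuousOn_mul continuousOn_id
  set D : ℝ := ∫ t in (0:ℝ)..W, t * w W t with hDdef
  have hDpos : 0 < D :=
    intervalIntegral.intervalIntegral_pos_of_pos_on hit
      (fun t ht => mul_pos ht.1 (hpos W hW t ⟨ht.1, ht.2.le⟩)) hW
  -- nonnegativity of the weight on [0, W]
  have hwnn : ∀ t ∈ Set.Icc (0:ℝ) W, 0 ≤ w W t := by
    intro t ht
    rcases eq_or_lt_of_le ht.1 with h0 | h0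
    · rw [hzero W hW t (by simp [← h0])]
    · exact (hpos W hW t ⟨h0, ht.2⟩).le
  -- pointwise estimate
  have hkey : ∀ t ∈ Set.Icc (0:ℝ) W,
      |f (x₀ + t) * g (x₀ + t) - f (x₀ - t) * g (x₀ - t) - 2 * t * L| ≤ ε * t := by
    intro t ht
    have hdist : dist ((x₀ + t, x₀ - t) : ℝ × ℝ) (x₀, x₀) < δ₃ := by
      rw [Prod.dist_eq]
      simp only [Real.dist_eq, add_sub_cancel_left, sub_sub_cancel_left, abs_neg]
      rw [abs_of_nonneg ht.1, sup_idem]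
      exact lt_of_le_of_lt ht.2 hWδ₃
    have h := hest hdist
    simp only [smul_eq_mul] at h
    have e1 : x₀ + t - (x₀ - t) = 2 * t := by ring
    rw [e1] at h
    have e2 : ‖(2:ℝ) * t‖ = 2 * t := by
      rw [Real.norm_eq_abs, abs_of_nonneg (by linarith [ht.1])]
    rw [Real.norm_eq_abs, e2] at h
    calc |f (x₀ + t) * g (x₀ + t) - f (x₀ - t) * g (x₀ - t) - 2 * t * L| ≤ ε / 2 * (2 * t) := h
      _ = ε * t := by ring
  -- the difference integrand
  set F : ℝ → ℝ := fun t =>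
    f (x₀ + t) * g (x₀ + t) * w W t - f (x₀ - t) * g (x₀ - t) * w W t - 2 * L * (t * w W t)
    with hFdef
  have hiF : IntervalIntegrable F volume 0 W := (hip.sub him).sub (hit.const_mul _)
  have hiG : IntervalIntegrable (fun t => ε * (t * w W t)) volume 0 W := hit.const_mul _
  have hFval : (∫ t in (0:ℝ)..W, F t) =
      (∫ t in (0:ℝ)..W, f (x₀ + t) * g (x₀ + t) * w W t) -
      (∫ t in (0:ℝ)..W, f (x₀ - t) * g (x₀ - t) * w W t) - 2 * L * D := by
    rw [hFdef, intervalIntegral.integral_sub (hip.sub him) (hit.const_mul _),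
      intervalIntegral.integral_sub hip him, intervalIntegral.integral_const_mul]
  have hGval : (∫ t in (0:ℝ)..W, ε * (t * w W t)) = ε * D := intervalIntegral.integral_const_mul _ _
  have hub : (∫ t in (0:ℝ)..W, F t) ≤ ε * D := by
    rw [← hGval]
    apply intervalIntegral.integral_mono_on hW.le hiF hiG
    intro t ht
    have h1 := hkey t ht
    have h2 := hwnn t ht
    have : F t = (f (x₀ + t) * g (x₀ + t) - f (x₀ - t) * g (x₀ - t) - 2 * t * L) * w W t := by
      rw [hFdef]; ring
    rw [this]
    calc (f (x₀ + t) * g (x₀ + t) - f (x₀ - t) * g (x₀ - t) - 2 * t * L) * w W t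
        ≤ (ε * t) * w W t :=
          mul_le_mul_of_nonneg_right (le_trans (le_abs_self _) h1) h2
      _ = ε * (t * w W t) := by ring
  have hlb : -(ε * D) ≤ (∫ t in (0:ℝ)..W, F t) := by
    have : -(ε * D) = ∫ t in (0:ℝ)..W, -(ε * (t * w W t)) := by
      rw [intervalIntegral.integral_neg, hGval]
    rw [this]
    apply intervalIntegral.integral_mono_on hW.le hiG.neg hiF
    intro t ht
    have h1 := hkey t ht
    have h2 := hwnn t ht
    have hF : F t = (f (x₀ + t) * g (x₀ + t) - f (x₀ - t) * g (x₀ - t) - 2 * t * L) * w W t := by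
      rw [hFdef]; ring
    rw [hF]
    calc -(ε * (t * w W t)) = (-(ε * t)) * w W t := by ring
      _ ≤ (f (x₀ + t) * g (x₀ + t) - f (x₀ - t) * g (x₀ - t) - 2 * t * L) * w W t :=
          mul_le_mul_of_nonneg_right (neg_le_of_abs_le h1) h2
  have habs : |(∫ t in (0:ℝ)..W, f (x₀ + t) * g (x₀ + t) * w W t) -
      (∫ t in (0:ℝ)..W, f (x₀ - t) * g (x₀ - t) * w W t) - 2 * L * D| ≤ ε * D := by
    rw [← hFval]; exact abs_le.2 ⟨hlb, hub⟩
  rw [Real.dist_eq]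
  have hDne : (2 * D) ≠ 0 := by positivity
  have hrw : ((∫ t in (0:ℝ)..W, f (x₀ + t) * g (x₀ + t) * w W t) -
      (∫ t in (0:ℝ)..W, f (x₀ - t) * g (x₀ - t) * w W t)) / (2 * D) - L =
      ((∫ t in (0:ℝ)..W, f (x₀ + t) * g (x₀ + t) * w W t) -
      (∫ t in (0:ℝ)..W, f (x₀ - t) * g (x₀ - t) * w W t) - 2 * L * D) / (2 * D) := by
    field_simp
  rw [hrw, abs_div, abs_of_pos (by positivity : (0:ℝ) < 2 * D)]
  rw [div_lt_iff₀ (by positivity : (0:ℝ) < 2 * D)]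
  calc |(∫ t in (0:ℝ)..W, f (x₀ + t) * g (x₀ + t) * w W t) -
      (∫ t in (0:ℝ)..W, f (x₀ - t) * g (x₀ - t) * w W t) - 2 * L * D| ≤ ε * D := habs
    _ < ε * (2 * D) := by nlinarith
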